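/- For every integer N ≥ 2, all indices 1 ≤ i, j ≤ N−1 with |i − j| ≥ 2, and every smooth complex-valued function f of the variables T_{k,i}, the Gauss–Givental raising operators commute, E_{i,i+1}(E_{j,j+1} f) = E_{j,j+1}(E_{i,i+1} f), and likewise the lowering operators commute, E_{i+1,i}(E_{j+1,j} f) = E_{j+1,j}(E_{i+1,i} f). -/

import Mathlib

noncomputable section

/-- Value of the variable `T_{k,i}` (1-based indices), with the convention that
`T_{k,i} = 0` whenever `(k,i)` does not satisfy `1 ≤ i ≤ k ≤ N-1`
(in particular `T_{N,i} = 0`). -/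
def tv (N : ℕ) (T : (Fin N × Fin N) → ℝ) (k i : ℕ) : ℝ :=
  if h : 1 ≤ i ∧ i ≤ k ∧ k ≤ N - 1 then T (⟨k - 1, by omega⟩, ⟨i - 1, by omega⟩) else 0

/-- Partial derivative `∂f/∂T_{k,i}` (1-based indices), with the convention that it is
zero whenever `(k,i)` does not satisfy `1 ≤ i ≤ k ≤ N-1`. -/
def pd (N : ℕ) (f : ((Fin N × Fin N) → ℝ) → ℂ) (k i : ℕ) (T : (Fin N × Fin N) → ℝ) : ℂ :=
  if h : 1 ≤ i ∧ i ≤ k ∧ k ≤ N - 1 then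
    fderiv ℝ f T (Pi.single ((⟨k - 1, by omega⟩ : Fin N), (⟨i - 1, by omega⟩ : Fin N)) 1)
  else 0

/-- The Gauss–Givental Cartan operator `E_{i,i}`. -/
def Ed (N : ℕ) (μ : ℕ → ℂ) (i : ℕ) (f : ((Fin N × Fin N) → ℝ) → ℂ)
    (T : (Fin N × Fin N) → ℝ) : ℂ :=
  μ i * f T + ∑ k ∈ Finset.Icc 1 (i - 1), pd N f (N + k - i) k T
    - ∑ k ∈ Finset.Icc i (N - 1), pd N f k i T

/-- The Gauss–Givental raising operator `E_{i,i+1}`. -/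
def Er (N : ℕ) (i : ℕ) (f : ((Fin N × Fin N) → ℝ) → ℂ) (T : (Fin N × Fin N) → ℝ) : ℂ :=
  ∑ n ∈ Finset.Icc 1 i,
    (∑ k ∈ Finset.Icc n i, (Real.exp (tv N T (N + k - i) k - tv N T (N + k - i - 1) k) : ℂ)) *
      (pd N f (N + n - i - 1) n T - pd N f (N + n - i - 1) (n - 1) T)

/-- The Gauss–Givental lowering operator `E_{i+1,i}`. -/
def El (N : ℕ) (μ : ℕ → ℂ) (i : ℕ) (f : ((Fin N × Fin N) → ℝ) → ℂ)
    (T : (Fin N × Fin N) → ℝ) : ℂ :=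
  ∑ k ∈ Finset.Icc i (N - 1),
    (Real.exp (tv N T k i - tv N T (k + 1) (i + 1)) : ℂ) *
      ((μ i - μ (i + 1)) * f T + ∑ s ∈ Finset.Icc i k, (pd N f s (i + 1) T - pd N f s i T))

namespace GG

variable {N : ℕ}

theorem one_le_wtop : ((⊤:ℕ∞) : WithTop ℕ∞) ≠ 0 := by simp

theorem fderiv_contDiff {E F : Type*} [NormedAddCommGroup E] [NormedSpace ℝ E]
    [NormedAddCommGroup F] [NormedSpace ℝ F] {f : E → F} (hf : ContDiff ℝ (⊤ : ℕ∞) f) :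
    ContDiff ℝ (⊤ : ℕ∞) (fderiv ℝ f) := hf.fderiv_right (le_of_eq ENat.coe_top_add_one)

def pt (N k i : ℕ) (h : 1 ≤ i ∧ i ≤ k ∧ k ≤ N - 1) : Fin N × Fin N :=
  (⟨k - 1, by omega⟩, ⟨i - 1, by omega⟩)

theorem tv_pos {k i : ℕ} (h : 1 ≤ i ∧ i ≤ k ∧ k ≤ N - 1) (T : (Fin N × Fin N) → ℝ) :
    tv N T k i = T (pt N k i h) := dif_pos h

theorem tv_neg {k i : ℕ} (h : ¬(1 ≤ i ∧ i ≤ k ∧ k ≤ N - 1)) (T : (Fin N × Fin N) → ℝ) :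
    tv N T k i = 0 := dif_neg h

theorem pd_pos {k i : ℕ} (h : 1 ≤ i ∧ i ≤ k ∧ k ≤ N - 1) (f : ((Fin N × Fin N) → ℝ) → ℂ)
    (T : (Fin N × Fin N) → ℝ) :
    pd N f k i T = fderiv ℝ f T (Pi.single (pt N k i h) 1) := dif_pos h

theorem pd_neg {k i : ℕ} (h : ¬(1 ≤ i ∧ i ≤ k ∧ k ≤ N - 1)) (f : ((Fin N × Fin N) → ℝ) → ℂ)
    (T : (Fin N × Fin N) → ℝ) : pd N f k i T = 0 := dif_neg h

theorem pt_ne {k i a b : ℕ} (h : 1 ≤ i ∧ i ≤ k ∧ k ≤ N - 1) (h' : 1 ≤ b ∧ b ≤ a ∧ a ≤ N - 1)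
    (hne : ¬(a = k ∧ b = i)) : pt N a b h' ≠ pt N k i h := by
  simp only [pt, Prod.mk.injEq, Fin.mk.injEq, ne_eq, not_and]
  omega

def tvD (N a b : ℕ) : (((Fin N × Fin N) → ℝ) →L[ℝ] ℝ) :=
  if h : 1 ≤ b ∧ b ≤ a ∧ a ≤ N - 1 then ContinuousLinearMap.proj (pt N a b h) else 0

theorem tv_hasFDerivAt (a b : ℕ) (T : (Fin N × Fin N) → ℝ) :
    HasFDerivAt (fun S => tv N S a b) (tvD N a b) T := by
  by_cases h : 1 ≤ b ∧ b ≤ a ∧ a ≤ N - 1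
  · have e : (fun S : (Fin N × Fin N) → ℝ => tv N S a b) = fun S => S (pt N a b h) :=
      funext fun S => tv_pos h S
    rw [e, tvD, dif_pos h]
    exact hasFDerivAt_apply (pt N a b h) T
  · have e : (fun S : (Fin N × Fin N) → ℝ => tv N S a b) = fun _ => 0 :=
      funext fun S => tv_neg h S
    rw [e, tvD, dif_neg h]
    exact hasFDerivAt_const 0 T

theorem tvD_single_zero {k i : ℕ} (h : 1 ≤ i ∧ i ≤ k ∧ k ≤ N - 1) (a b : ℕ)
    (hne : ¬(a = k ∧ b = i)) : tvD N a b (Pi.single (pt N k i h) 1) = 0 := by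
  rw [tvD]
  split_ifs with h'
  · rw [ContinuousLinearMap.proj_apply]
    exact Pi.single_eq_of_ne (pt_ne h h' hne) 1
  · rfl

theorem cf_hasFDerivAt (a b c d : ℕ) (T : (Fin N × Fin N) → ℝ) :
    HasFDerivAt (fun S => ((Real.exp (tv N S a b - tv N S c d) : ℝ) : ℂ))
      (Complex.ofRealCLM.comp
        (Real.exp (tv N T a b - tv N T c d) • (tvD N a b - tvD N c d))) T :=
  Complex.ofRealCLM.hasFDerivAt.comp T
    (((tv_hasFDerivAt a b T).sub (tv_hasFDerivAt c d T)).exp)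

theorem cf_diff (a b c d : ℕ) :
    Differentiable ℝ (fun S : (Fin N × Fin N) → ℝ =>
      ((Real.exp (tv N S a b - tv N S c d) : ℝ) : ℂ)) :=
  fun T => (cf_hasFDerivAt a b c d T).differentiableAt

theorem pd_cf_zero {k i : ℕ} (a b c d : ℕ) (h1 : ¬(a = k ∧ b = i)) (h2 : ¬(c = k ∧ d = i))
    (T : (Fin N × Fin N) → ℝ) :
    pd N (fun S => ((Real.exp (tv N S a b - tv N S c d) : ℝ) : ℂ)) k i T = 0 := by
  by_cases h : 1 ≤ i ∧ i ≤ k ∧ k ≤ N - 1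
  · rw [pd_pos h, (cf_hasFDerivAt a b c d T).fderiv]
    simp [tvD_single_zero h a b h1, tvD_single_zero h c d h2]
  · rw [pd_neg h]

theorem pd_sum {ι : Type*} (s : Finset ι) (F : ι → ((Fin N × Fin N) → ℝ) → ℂ)
    (hF : ∀ x ∈ s, Differentiable ℝ (F x)) (k i : ℕ) (T : (Fin N × Fin N) → ℝ) :
    pd N (fun S => ∑ x ∈ s, F x S) k i T = ∑ x ∈ s, pd N (F x) k i T := by
  by_cases h : 1 ≤ i ∧ i ≤ k ∧ k ≤ N - 1
  · rw [pd_pos h, fderiv_fun_sum (fun x hx => (hF x hx) T)]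
    rw [ContinuousLinearMap.sum_apply]
    exact Finset.sum_congr rfl fun x hx => (pd_pos h (F x) T).symm
  · simp [pd_neg h]

theorem pd_mul (g h : ((Fin N × Fin N) → ℝ) → ℂ) (hg : Differentiable ℝ g)
    (hh : Differentiable ℝ h) (k i : ℕ) (T : (Fin N × Fin N) → ℝ) :
    pd N (fun S => g S * h S) k i T = pd N g k i T * h T + g T * pd N h k i T := by
  by_cases hc : 1 ≤ i ∧ i ≤ k ∧ k ≤ N - 1
  · rw [pd_pos hc, pd_pos hc, pd_pos hc, fderiv_fun_mul (hg T) (hh T)]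
    simp only [ContinuousLinearMap.add_apply, ContinuousLinearMap.smul_apply, smul_eq_mul]
    ring
  · simp [pd_neg hc]

theorem pd_const_mul (g : ((Fin N × Fin N) → ℝ) → ℂ) (c : ℂ) (hg : Differentiable ℝ g)
    (k i : ℕ) (T : (Fin N × Fin N) → ℝ) :
    pd N (fun S => c * g S) k i T = c * pd N g k i T := by
  by_cases hc : 1 ≤ i ∧ i ≤ k ∧ k ≤ N - 1
  · rw [pd_pos hc, pd_pos hc, fderiv_const_mul (hg T) c]
    simp
  · simp [pd_neg hc]

theorem pd_sub (g h : ((Fin N × Fin N) → ℝ) → ℂ) (hg : Differentiable ℝ g)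
    (hh : Differentiable ℝ h) (k i : ℕ) (T : (Fin N × Fin N) → ℝ) :
    pd N (fun S => g S - h S) k i T = pd N g k i T - pd N h k i T := by
  by_cases hc : 1 ≤ i ∧ i ≤ k ∧ k ≤ N - 1
  · rw [pd_pos hc, pd_pos hc, pd_pos hc, fderiv_fun_sub (hg T) (hh T)]
    simp
  · simp [pd_neg hc]

theorem pd_add (g h : ((Fin N × Fin N) → ℝ) → ℂ) (hg : Differentiable ℝ g)
    (hh : Differentiable ℝ h) (k i : ℕ) (T : (Fin N × Fin N) → ℝ) :
    pd N (fun S => g S + h S) k i T = pd N g k i T + pd N h k i T := by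
  by_cases hc : 1 ≤ i ∧ i ≤ k ∧ k ≤ N - 1
  · rw [pd_pos hc, pd_pos hc, pd_pos hc, fderiv_fun_add (hg T) (hh T)]
    simp
  · simp [pd_neg hc]

theorem pd_const (c : ℂ) (k i : ℕ) (T : (Fin N × Fin N) → ℝ) :
    pd N (fun _ => c) k i T = 0 := by
  by_cases hc : 1 ≤ i ∧ i ≤ k ∧ k ≤ N - 1
  · rw [pd_pos hc, fderiv_fun_const]
    simp
  · exact pd_neg hc _ T

theorem pd_hasFDerivAt {f : ((Fin N × Fin N) → ℝ) → ℂ} (hf : ContDiff ℝ (⊤ : ℕ∞) f)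
    {k i : ℕ} (h : 1 ≤ i ∧ i ≤ k ∧ k ≤ N - 1) (T : (Fin N × Fin N) → ℝ) :
    HasFDerivAt (fun S => pd N f k i S)
      ((ContinuousLinearMap.apply ℝ ℂ (Pi.single (pt N k i h) 1)).comp
        (fderiv ℝ (fderiv ℝ f) T)) T := by
  have e : (fun S => pd N f k i S) = fun S => fderiv ℝ f S (Pi.single (pt N k i h) 1) :=
    funext fun S => pd_pos h f S
  rw [e]
  exact (ContinuousLinearMap.apply ℝ ℂ _).hasFDerivAt.comp T
    (((fderiv_contDiff hf).differentiable one_le_wtop) T).hasFDerivAt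

theorem pd_diff {f : ((Fin N × Fin N) → ℝ) → ℂ} (hf : ContDiff ℝ (⊤ : ℕ∞) f) (k i : ℕ) :
    Differentiable ℝ (fun S => pd N f k i S) := by
  by_cases h : 1 ≤ i ∧ i ≤ k ∧ k ≤ N - 1
  · exact fun T => (pd_hasFDerivAt hf h T).differentiableAt
  · have e : (fun S => pd N f k i S) = fun _ => (0:ℂ) := funext fun S => pd_neg h f S
    rw [e]; exact differentiable_const 0

theorem pd_pd_comm {f : ((Fin N × Fin N) → ℝ) → ℂ} (hf : ContDiff ℝ (⊤ : ℕ∞) f)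
    (a b k i : ℕ) (T : (Fin N × Fin N) → ℝ) :
    pd N (fun S => pd N f a b S) k i T = pd N (fun S => pd N f k i S) a b T := by
  by_cases h1 : 1 ≤ b ∧ b ≤ a ∧ a ≤ N - 1
  · by_cases h2 : 1 ≤ i ∧ i ≤ k ∧ k ≤ N - 1
    · rw [pd_pos h2, pd_pos h1, (pd_hasFDerivAt hf h1 T).fderiv,
        (pd_hasFDerivAt hf h2 T).fderiv]
      simp only [ContinuousLinearMap.coe_comp', Function.comp_apply,
        ContinuousLinearMap.apply_apply]
      exact second_derivative_symmetric (fun y => ((hf.differentiable one_le_wtop) y).hasFDerivAt)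
        (((fderiv_contDiff hf).differentiable one_le_wtop) T).hasFDerivAt _ _
    · rw [pd_neg h2]
      have e : (fun S => pd N f k i S) = fun _ => (0:ℂ) := funext fun S => pd_neg h2 f S
      rw [e, pd_const]
  · rw [pd_neg h1]
    have e : (fun S => pd N f a b S) = fun _ => (0:ℂ) := funext fun S => pd_neg h1 f S
    rw [e, pd_const]

/-! ### Raising operators -/

def coA (N i n : ℕ) (T : (Fin N × Fin N) → ℝ) : ℂ :=
  ∑ k ∈ Finset.Icc n i, (Real.exp (tv N T (N + k - i) k - tv N T (N + k - i - 1) k) : ℂ)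

theorem Er_apply (i : ℕ) (g : ((Fin N × Fin N) → ℝ) → ℂ) (T : (Fin N × Fin N) → ℝ) :
    Er N i g T = ∑ n ∈ Finset.Icc 1 i,
      coA N i n T * (pd N g (N + n - i - 1) n T - pd N g (N + n - i - 1) (n - 1) T) := rfl

theorem coA_diff (i n : ℕ) : Differentiable ℝ (fun S => coA N i n S) :=
  Differentiable.fun_sum fun k _ => cf_diff (N + k - i) k (N + k - i - 1) k

theorem pd_coA_zero (i n a b : ℕ)
    (hc : ∀ k, n ≤ k → k ≤ i → ¬(N + k - i = a ∧ k = b) ∧ ¬(N + k - i - 1 = a ∧ k = b))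
    (T : (Fin N × Fin N) → ℝ) :
    pd N (fun S => coA N i n S) a b T = 0 := by
  have e : (fun S => coA N i n S) = fun S => ∑ k ∈ Finset.Icc n i,
      (fun S' : (Fin N × Fin N) → ℝ =>
        ((Real.exp (tv N S' (N + k - i) k - tv N S' (N + k - i - 1) k) : ℝ) : ℂ)) S := rfl
  rw [e, pd_sum _ _ (fun k _ => cf_diff (N + k - i) k (N + k - i - 1) k)]
  refine Finset.sum_eq_zero fun k hk => ?_
  simp only [Finset.mem_Icc] at hk
  exact pd_cf_zero _ _ _ _ (hc k hk.1 hk.2).1 (hc k hk.1 hk.2).2 T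

theorem Er_diff {f : ((Fin N × Fin N) → ℝ) → ℂ} (hf : ContDiff ℝ (⊤ : ℕ∞) f) (j : ℕ) :
    Differentiable ℝ (fun S => Er N j f S) := by
  have e : (fun S => Er N j f S) = fun S => ∑ n ∈ Finset.Icc 1 j,
      coA N j n S * (pd N f (N + n - j - 1) n S - pd N f (N + n - j - 1) (n - 1) S) := rfl
  rw [e]
  exact Differentiable.fun_sum fun n _ =>
    (coA_diff j n).fun_mul ((pd_diff hf _ _).fun_sub (pd_diff hf _ _))

theorem pd_Er {f : ((Fin N × Fin N) → ℝ) → ℂ} (hf : ContDiff ℝ (⊤ : ℕ∞) f) (j a b : ℕ)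
    (T : (Fin N × Fin N) → ℝ)
    (hc : ∀ k, 1 ≤ k → k ≤ j → ¬(N + k - j = a ∧ k = b) ∧ ¬(N + k - j - 1 = a ∧ k = b)) :
    pd N (fun S => Er N j f S) a b T
      = ∑ m ∈ Finset.Icc 1 j, coA N j m T *
          (pd N (fun S => pd N f (N + m - j - 1) m S) a b T
            - pd N (fun S => pd N f (N + m - j - 1) (m - 1) S) a b T) := by
  have e : (fun S => Er N j f S) = fun S => ∑ m ∈ Finset.Icc 1 j,
      (fun S' => coA N j m S' *
        (pd N f (N + m - j - 1) m S' - pd N f (N + m - j - 1) (m - 1) S')) S := rfl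
  rw [e, pd_sum _ _ (fun m _ => (coA_diff j m).fun_mul ((pd_diff hf _ _).fun_sub (pd_diff hf _ _)))]
  refine Finset.sum_congr rfl fun m hm => ?_
  simp only [Finset.mem_Icc] at hm
  rw [pd_mul (fun S => coA N j m S)
      (fun S => pd N f (N + m - j - 1) m S - pd N f (N + m - j - 1) (m - 1) S)
      (coA_diff j m) ((pd_diff hf _ _).fun_sub (pd_diff hf _ _)) a b T]
  rw [pd_coA_zero j m a b (fun k hk1 hk2 => hc k (le_trans hm.1 hk1) hk2) T]
  rw [pd_sub (fun S => pd N f (N + m - j - 1) m S) (fun S => pd N f (N + m - j - 1) (m - 1) S)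
      (pd_diff hf _ _) (pd_diff hf _ _) a b T]
  ring

def S2 (N : ℕ) (f : ((Fin N × Fin N) → ℝ) → ℂ) (j m i n : ℕ) (T : (Fin N × Fin N) → ℝ) : ℂ :=
  (pd N (fun S => pd N f (N + m - j - 1) m S) (N + n - i - 1) n T
    - pd N (fun S => pd N f (N + m - j - 1) (m - 1) S) (N + n - i - 1) n T)
  - (pd N (fun S => pd N f (N + m - j - 1) m S) (N + n - i - 1) (n - 1) T
    - pd N (fun S => pd N f (N + m - j - 1) (m - 1) S) (N + n - i - 1) (n - 1) T)

theorem S2_symm {f : ((Fin N × Fin N) → ℝ) → ℂ} (hf : ContDiff ℝ (⊤ : ℕ∞) f)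
    (j m i n : ℕ) (T : (Fin N × Fin N) → ℝ) :
    S2 N f j m i n T = S2 N f i n j m T := by
  simp only [S2]
  rw [pd_pd_comm hf (N + m - j - 1) m (N + n - i - 1) n T,
    pd_pd_comm hf (N + m - j - 1) (m - 1) (N + n - i - 1) n T,
    pd_pd_comm hf (N + m - j - 1) m (N + n - i - 1) (n - 1) T,
    pd_pd_comm hf (N + m - j - 1) (m - 1) (N + n - i - 1) (n - 1) T]
  ring

theorem Er_Er {f : ((Fin N × Fin N) → ℝ) → ℂ} (hf : ContDiff ℝ (⊤ : ℕ∞) f)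
    (i j : ℕ) (hi2 : i ≤ N - 1) (hj2 : j ≤ N - 1) (hij : i + 2 ≤ j ∨ j + 2 ≤ i)
    (T : (Fin N × Fin N) → ℝ) :
    Er N i (fun S => Er N j f S) T
      = ∑ n ∈ Finset.Icc 1 i, ∑ m ∈ Finset.Icc 1 j,
          coA N i n T * coA N j m T * S2 N f j m i n T := by
  rw [Er_apply i (fun S => Er N j f S) T]
  refine Finset.sum_congr rfl fun n hn => ?_
  simp only [Finset.mem_Icc] at hn
  rw [pd_Er hf j (N + n - i - 1) n T (by intro k hk1 hk2; constructor <;> rintro ⟨e1, e2⟩ <;> omega),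
    pd_Er hf j (N + n - i - 1) (n - 1) T
      (by intro k hk1 hk2; constructor <;> rintro ⟨e1, e2⟩ <;> omega),
    ← Finset.sum_sub_distrib, Finset.mul_sum]
  refine Finset.sum_congr rfl fun m hm => ?_
  simp only [S2]
  ring

/-! ### Lowering operators -/

def coE (N i k : ℕ) (T : (Fin N × Fin N) → ℝ) : ℂ :=
  (Real.exp (tv N T k i - tv N T (k + 1) (i + 1)) : ℂ)

theorem El_apply (μ : ℕ → ℂ) (i : ℕ) (g : ((Fin N × Fin N) → ℝ) → ℂ)
    (T : (Fin N × Fin N) → ℝ) :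
    El N μ i g T = ∑ k ∈ Finset.Icc i (N - 1),
      coE N i k T * ((μ i - μ (i + 1)) * g T
        + ∑ s ∈ Finset.Icc i k, (pd N g s (i + 1) T - pd N g s i T)) := rfl

theorem coE_diff (i k : ℕ) : Differentiable ℝ (fun S => coE N i k S) :=
  cf_diff k i (k + 1) (i + 1)

theorem El_diff {f : ((Fin N × Fin N) → ℝ) → ℂ} (hf : ContDiff ℝ (⊤ : ℕ∞) f) (μ : ℕ → ℂ)
    (j : ℕ) : Differentiable ℝ (fun S => El N μ j f S) := by
  have e : (fun S => El N μ j f S) = fun S => ∑ k ∈ Finset.Icc j (N - 1),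
      coE N j k S * ((μ j - μ (j + 1)) * f S
        + ∑ s ∈ Finset.Icc j k, (pd N f s (j + 1) S - pd N f s j S)) := rfl
  rw [e]
  exact Differentiable.fun_sum fun k _ => (coE_diff j k).fun_mul
    (((hf.differentiable one_le_wtop).const_mul _).fun_add
      (Differentiable.fun_sum fun s _ => (pd_diff hf _ _).fun_sub (pd_diff hf _ _)))

theorem pd_El {f : ((Fin N × Fin N) → ℝ) → ℂ} (hf : ContDiff ℝ (⊤ : ℕ∞) f) (μ : ℕ → ℂ)
    (j a b : ℕ) (T : (Fin N × Fin N) → ℝ) (hb1 : b ≠ j) (hb2 : b ≠ j + 1) :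
    pd N (fun S => El N μ j f S) a b T
      = ∑ k' ∈ Finset.Icc j (N - 1), coE N j k' T *
          ((μ j - μ (j + 1)) * pd N f a b T
            + ∑ s' ∈ Finset.Icc j k',
                (pd N (fun S => pd N f s' (j + 1) S) a b T
                  - pd N (fun S => pd N f s' j S) a b T)) := by
  have e : (fun S => El N μ j f S) = fun S => ∑ k' ∈ Finset.Icc j (N - 1),
      (fun S' => coE N j k' S' * ((μ j - μ (j + 1)) * f S'
        + ∑ s' ∈ Finset.Icc j k', (pd N f s' (j + 1) S' - pd N f s' j S'))) S := rfl
  rw [e, pd_sum _ _ (fun k' _ => (coE_diff j k').fun_mul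
    (((hf.differentiable one_le_wtop).const_mul _).fun_add
      (Differentiable.fun_sum fun s _ => (pd_diff hf _ _).fun_sub (pd_diff hf _ _))))]
  refine Finset.sum_congr rfl fun k' hk' => ?_
  rw [pd_mul (fun S => coE N j k' S)
      (fun S => (μ j - μ (j + 1)) * f S
        + ∑ s' ∈ Finset.Icc j k', (pd N f s' (j + 1) S - pd N f s' j S))
      (coE_diff j k')
      (((hf.differentiable one_le_wtop).const_mul _).fun_add
        (Differentiable.fun_sum fun s _ => (pd_diff hf _ _).fun_sub (pd_diff hf _ _))) a b T]
  have h0 : pd N (fun S => coE N j k' S) a b T = 0 :=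
    pd_cf_zero k' j (k' + 1) (j + 1) (by rintro ⟨e1, e2⟩; omega) (by rintro ⟨e1, e2⟩; omega) T
  rw [h0]
  rw [pd_add (fun S => (μ j - μ (j + 1)) * f S)
      (fun S => ∑ s' ∈ Finset.Icc j k', (pd N f s' (j + 1) S - pd N f s' j S))
      ((hf.differentiable one_le_wtop).const_mul _)
      (Differentiable.fun_sum fun s _ => (pd_diff hf _ _).fun_sub (pd_diff hf _ _)) a b T]
  rw [pd_const_mul _ _ (hf.differentiable one_le_wtop) a b T]
  rw [pd_sum _ (fun s' => fun S => pd N f s' (j + 1) S - pd N f s' j S)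
      (fun s' _ => (pd_diff hf _ _).fun_sub (pd_diff hf _ _)) a b T]
  rw [Finset.sum_congr rfl fun s' _ => pd_sub (fun S => pd N f s' (j + 1) S)
      (fun S => pd N f s' j S) (pd_diff hf _ _) (pd_diff hf _ _) a b T]
  ring

def R2 (N : ℕ) (f : ((Fin N × Fin N) → ℝ) → ℂ) (s' j s i : ℕ) (T : (Fin N × Fin N) → ℝ) : ℂ :=
  (pd N (fun S => pd N f s' (j + 1) S) s (i + 1) T - pd N (fun S => pd N f s' j S) s (i + 1) T)
  - (pd N (fun S => pd N f s' (j + 1) S) s i T - pd N (fun S => pd N f s' j S) s i T)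

theorem R2_symm {f : ((Fin N × Fin N) → ℝ) → ℂ} (hf : ContDiff ℝ (⊤ : ℕ∞) f)
    (s' j s i : ℕ) (T : (Fin N × Fin N) → ℝ) :
    R2 N f s' j s i T = R2 N f s i s' j T := by
  simp only [R2]
  rw [pd_pd_comm hf s' (j + 1) s (i + 1) T, pd_pd_comm hf s' j s (i + 1) T,
    pd_pd_comm hf s' (j + 1) s i T, pd_pd_comm hf s' j s i T]
  ring

theorem El_El {f : ((Fin N × Fin N) → ℝ) → ℂ} (hf : ContDiff ℝ (⊤ : ℕ∞) f) (μ : ℕ → ℂ)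
    (i j : ℕ) (hij : i + 2 ≤ j ∨ j + 2 ≤ i) (T : (Fin N × Fin N) → ℝ) :
    El N μ i (fun S => El N μ j f S) T
      = ∑ k ∈ Finset.Icc i (N - 1), ∑ k' ∈ Finset.Icc j (N - 1),
          coE N i k T * coE N j k' T *
            ((μ i - μ (i + 1)) * ((μ j - μ (j + 1)) * f T)
              + (μ i - μ (i + 1)) *
                  ∑ s' ∈ Finset.Icc j k', (pd N f s' (j + 1) T - pd N f s' j T)
              + (μ j - μ (j + 1)) *
                  ∑ s ∈ Finset.Icc i k, (pd N f s (i + 1) T - pd N f s i T)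
              + ∑ s ∈ Finset.Icc i k, ∑ s' ∈ Finset.Icc j k', R2 N f s' j s i T) := by
  rw [El_apply μ i (fun S => El N μ j f S) T]
  refine Finset.sum_congr rfl fun k hk => ?_
  have hs : ∀ s ∈ Finset.Icc i k,
      pd N (fun S => El N μ j f S) s (i + 1) T - pd N (fun S => El N μ j f S) s i T
        = ∑ k' ∈ Finset.Icc j (N - 1), coE N j k' T *
            ((μ j - μ (j + 1)) * (pd N f s (i + 1) T - pd N f s i T)
              + ∑ s' ∈ Finset.Icc j k', R2 N f s' j s i T) := by
    intro s _
    rw [pd_El hf μ j s (i + 1) T (by omega) (by omega),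
      pd_El hf μ j s i T (by omega) (by omega), ← Finset.sum_sub_distrib]
    refine Finset.sum_congr rfl fun k' _ => ?_
    conv_rhs => rw [show (∑ s' ∈ Finset.Icc j k', R2 N f s' j s i T)
      = (∑ s' ∈ Finset.Icc j k',
          (pd N (fun S => pd N f s' (j + 1) S) s (i + 1) T
            - pd N (fun S => pd N f s' j S) s (i + 1) T))
        - (∑ s' ∈ Finset.Icc j k',
          (pd N (fun S => pd N f s' (j + 1) S) s i T
            - pd N (fun S => pd N f s' j S) s i T)) from by
        rw [← Finset.sum_sub_distrib]; exact Finset.sum_congr rfl fun s' _ => rfl]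
    ring
  rw [El_apply μ j f T, Finset.sum_congr rfl hs, Finset.sum_comm, Finset.mul_sum,
    ← Finset.sum_add_distrib, Finset.mul_sum]
  refine Finset.sum_congr rfl fun k' _ => ?_
  rw [← Finset.mul_sum, Finset.sum_add_distrib, ← Finset.mul_sum]
  ring

end GG

/-- for `|i − j| ≥ 2` the Gauss–Givental raising operators commute, and
likewise the lowering operators commute. -/
theorem raise_raise_and_lower_lower_commute (N : ℕ) (hN : 2 ≤ N) (μ : ℕ → ℂ)
    (f : ((Fin N × Fin N) → ℝ) → ℂ) (hf : ContDiff ℝ (⊤ : ℕ∞) f)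
    (i j : ℕ) (hi1 : 1 ≤ i) (hi2 : i ≤ N - 1) (hj1 : 1 ≤ j) (hj2 : j ≤ N - 1)
    (hij : i + 2 ≤ j ∨ j + 2 ≤ i)
    (T : (Fin N × Fin N) → ℝ) :
    Er N i (fun S => Er N j f S) T = Er N j (fun S => Er N i f S) T ∧
    El N μ i (fun S => El N μ j f S) T = El N μ j (fun S => El N μ i f S) T := by
  constructor
  · rw [GG.Er_Er hf i j hi2 hj2 hij T, GG.Er_Er hf j i hj2 hi2 hij.symm T, Finset.sum_comm]
    refine Finset.sum_congr rfl fun n _ => Finset.sum_congr rfl fun m _ => ?_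
    rw [GG.S2_symm hf j n i m T]
    ring
  · rw [GG.El_El hf μ i j hij T, GG.El_El hf μ j i hij.symm T, Finset.sum_comm]
    refine Finset.sum_congr rfl fun k _ => Finset.sum_congr rfl fun k' _ => ?_
    rw [Finset.sum_comm]
    have h2 : (∑ y ∈ Finset.Icc j k, ∑ x ∈ Finset.Icc i k', GG.R2 N f y j x i T)
        = ∑ y ∈ Finset.Icc j k, ∑ x ∈ Finset.Icc i k', GG.R2 N f x i y j T :=
      Finset.sum_congr rfl fun y _ => Finset.sum_congr rfl fun x _ => GG.R2_symm hf y j x i T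
    rw [h2]
    ring
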